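/- Let f : ℕ → ℂ with f(1) ≠ 0 and let g be the binomial inverse of f, i.e., g(n) = ξ(n)·h(n) where h is the Dirichlet inverse of n ↦ f(n)/ξ(n). Let α, β : [1,∞) → ℂ be arbitrary functions (extended by 0 below 1). If α(x) = ∑_{n ≤ x} (f(n)/ξ(n))·β(x/n) for all real x ≥ 1, then β(x) = ∑_{n ≤ x} (g(n)/ξ(n))·α(x/n) for all real x ≥ 1. -/

import Mathlib

/-- `ξ(n) = ∏_p ν_p(n)!`. -/
def xi (n : ℕ) : ℕ := ∏ p ∈ n.primeFactors, Nat.factorial (n.factorization p)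

/-- The Dirichlet convolution. -/
noncomputable def dconv (f g : ℕ → ℂ) (n : ℕ) : ℂ :=
  ∑ d ∈ n.divisors, f d * g (n / d)

/-- `δ(1) = 1`, `δ(n) = 0` for `n > 1`. -/
def delta (n : ℕ) : ℂ := if n = 1 then 1 else 0

lemma xi_ne_zero (n : ℕ) : (xi n : ℂ) ≠ 0 := by
  have : xi n ≠ 0 := by
    unfold xi
    exact Finset.prod_ne_zero_iff.mpr fun p _ => Nat.factorial_ne_zero _
  exact_mod_cast this

lemma swap_sum (N : ℕ) (t : ℕ → ℕ → ℂ) :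
    ∑ n ∈ Finset.Icc 1 N, ∑ m ∈ Finset.Icc 1 (N / n), t n m
      = ∑ k ∈ Finset.Icc 1 N, ∑ p ∈ k.divisorsAntidiagonal, t p.1 p.2 := by
  rw [Finset.sum_sigma', Finset.sum_sigma']
  refine Finset.sum_nbij' (fun x => ⟨x.1 * x.2, (x.1, x.2)⟩)
    (fun x => ⟨x.2.1, x.2.2⟩) ?_ ?_ ?_ ?_ ?_
  · rintro ⟨n, m⟩ hx
    simp only [Finset.mem_sigma, Finset.mem_Icc, Nat.mem_divisorsAntidiagonal] at hx ⊢
    obtain ⟨⟨hn1, hnN⟩, hm1, hmN⟩ := hx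
    have hmul : m * n ≤ N := (Nat.le_div_iff_mul_le (by omega)).mp hmN
    refine ⟨⟨by nlinarith, by nlinarith⟩, ?_⟩
    exact ⟨trivial, by positivity⟩
  · rintro ⟨k, d, e⟩ hx
    simp only [Finset.mem_sigma, Finset.mem_Icc, Nat.mem_divisorsAntidiagonal] at hx ⊢
    obtain ⟨⟨hk1, hkN⟩, hde, hk0⟩ := hx
    have hd : 0 < d := Nat.pos_of_ne_zero (by rintro rfl; simp at hde; omega)
    have he : 0 < e := Nat.pos_of_ne_zero (by rintro rfl; simp at hde; omega)
    refine ⟨⟨hd, by nlinarith⟩, he, (Nat.le_div_iff_mul_le hd).mpr (by nlinarith)⟩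
  · rintro ⟨n, m⟩ hx
    rfl
  · rintro ⟨k, d, e⟩ hx
    simp only [Finset.mem_sigma, Finset.mem_Icc, Nat.mem_divisorsAntidiagonal] at hx
    obtain ⟨_, hde, _⟩ := hx
    simp [hde]
  · rintro ⟨n, m⟩ hx
    rfl

theorem mobius_type_inversion (f h : ℕ → ℂ) (hf : f 1 ≠ 0)
    (hinv : ∀ n : ℕ, 0 < n → dconv (fun m => f m / (xi m : ℂ)) h n = delta n)
    (g : ℕ → ℂ) (hg : g = fun n => (xi n : ℂ) * h n)
    (α β : ℝ → ℂ)
    (hα : ∀ x : ℝ, 1 ≤ x →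
      α x = ∑ n ∈ Finset.Icc 1 ⌊x⌋₊, (f n / (xi n : ℂ)) * β (x / n)) :
    ∀ x : ℝ, 1 ≤ x →
      β x = ∑ n ∈ Finset.Icc 1 ⌊x⌋₊, (g n / (xi n : ℂ)) * α (x / n) := by
  intro x hx
  have hx0 : (0:ℝ) ≤ x := by linarith
  set N := ⌊x⌋₊ with hN
  have hN1 : 1 ≤ N := (Nat.one_le_floor_iff x).mpr hx
  have step1 : ∀ n ∈ Finset.Icc 1 N, (g n / (xi n : ℂ)) * α (x / n)
      = ∑ m ∈ Finset.Icc 1 (N / n), h n * ((f m / (xi m : ℂ)) * β (x / (↑(n * m) : ℝ))) := by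
    intro n hn
    rw [Finset.mem_Icc] at hn
    have hn0 : (0:ℝ) < (n:ℝ) := by exact_mod_cast hn.1
    have hnx : (n : ℝ) ≤ x := le_trans (by exact_mod_cast hn.2) (Nat.floor_le hx0)
    have hxn : (1:ℝ) ≤ x / n := (one_le_div hn0).mpr hnx
    have hfl : ⌊x / (n:ℝ)⌋₊ = N / n := by rw [hN, Nat.floor_div_natCast]
    have hcan : g n / (xi n : ℂ) = h n := by
      rw [hg]; exact mul_div_cancel_left₀ _ (xi_ne_zero n)
    rw [hcan, hα _ hxn, hfl, Finset.mul_sum]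
    refine Finset.sum_congr rfl fun m _ => ?_
    rw [div_div, ← Nat.cast_mul]
  rw [Finset.sum_congr rfl step1, swap_sum N
    (fun n m => h n * ((f m / (xi m : ℂ)) * β (x / (↑(n * m) : ℝ))))]
  have step2 : ∀ k ∈ Finset.Icc 1 N,
      (∑ p ∈ k.divisorsAntidiagonal,
        h p.1 * ((f p.2 / (xi p.2 : ℂ)) * β (x / (↑(p.1 * p.2) : ℝ))))
      = delta k * β (x / k) := by
    intro k hk
    rw [Finset.mem_Icc] at hk
    have hterm : ∀ p ∈ k.divisorsAntidiagonal,
        h p.1 * ((f p.2 / (xi p.2 : ℂ)) * β (x / (↑(p.1 * p.2) : ℝ)))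
        = (f p.2 / (xi p.2 : ℂ)) * h p.1 * β (x / k) := by
      intro p hp
      rw [Nat.mem_divisorsAntidiagonal] at hp
      rw [hp.1]
      ring
    rw [Finset.sum_congr rfl hterm, ← Finset.sum_mul]
    congr 1
    rw [← hinv k (by omega)]
    unfold dconv
    exact Nat.sum_divisorsAntidiagonal' (fun d e => (f e / (xi e : ℂ)) * h d)
  rw [Finset.sum_congr rfl step2]
  rw [Finset.sum_eq_single 1]
  · simp [delta]
  · intro k hk hk1
    simp [delta, hk1]
  · intro hk
    exact absurd (Finset.mem_Icc.mpr ⟨le_refl 1, hN1⟩) hk
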